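/- Let r : ℝ → ℝ³ be continuous and let q⃗ : ℝ → ℝ³ be differentiable with |q⃗(t)| < 1 for all t, satisfying the ODE q⃗'(t) = (1/2)(√(1 − |q⃗(t)|²)·r(t) + q⃗(t) × r(t)). Define Q(t) := R(q⃗(t)), where for q⃗ = (q₁, q₂, q₃) with q₀ := √(1 − |q⃗|²), R(q⃗) is the matrix with rows (q₀² + q₁² − q₂² − q₃², 2(q₁q₂ − q₀q₃), 2(q₁q₃ + q₀q₂)), (2(q₂q₁ + q₀q₃), q₀² − q₁² + q₂² − q₃², 2(q₂q₃ − q₀q₁)), (2(q₃q₁ − q₀q₂), 2(q₃q₂ + q₀q₁), q₀² − q₁² − q₂² + q₃²). Then Q is differentiable and Q'(t) = Q(t)·S(r(t)) for all t, where S(y) is the skew-symmetric matrix with S(y)x = y × x. -/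

import Mathlib

/-- The rotation matrix associated with a quaternion parameter `p` with `|p| ≤ 1`
(`p₀ := √(1 − |p|²)`). -/
noncomputable def quatRot (p : Fin 3 → ℝ) : Matrix (Fin 3) (Fin 3) ℝ :=
  let p0 := Real.sqrt (1 - dotProduct p p)
  !![p0 ^ 2 + p 0 ^ 2 - p 1 ^ 2 - p 2 ^ 2, 2 * (p 0 * p 1 - p0 * p 2),
       2 * (p 0 * p 2 + p0 * p 1);
     2 * (p 1 * p 0 + p0 * p 2), p0 ^ 2 - p 0 ^ 2 + p 1 ^ 2 - p 2 ^ 2,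
       2 * (p 1 * p 2 - p0 * p 0);
     2 * (p 2 * p 0 - p0 * p 1), 2 * (p 2 * p 1 + p0 * p 0),
       p0 ^ 2 - p 0 ^ 2 - p 1 ^ 2 + p 2 ^ 2]

/-- The skew-symmetric matrix `S(y)` with `S(y)x = y × x`. -/
def skew3 (y : Fin 3 → ℝ) : Matrix (Fin 3) (Fin 3) ℝ :=
  !![0, -y 2, y 1;
     y 2, 0, -y 0;
     -y 1, y 0, 0]

lemma fin3_mk_two (h : 2 < 3) : (⟨2, h⟩ : Fin 3) = 2 := rfl

/-- **The quaternion ODE yields the attitude ODE `Q' = Q·S(r)`.** -/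
theorem quaternion_ode_to_rotation_ode
    (r : ℝ → Fin 3 → ℝ) (hr : Continuous r)
    (q : ℝ → Fin 3 → ℝ)
    (hqnorm : ∀ t, dotProduct (q t) (q t) < 1)
    (hqode : ∀ t, HasDerivAt q
      ((1 / 2 : ℝ) • (Real.sqrt (1 - dotProduct (q t) (q t)) • r t
        + crossProduct (q t) (r t))) t) :
    ∀ t, ∀ i j, HasDerivAt (fun u => quatRot (q u) i j)
      ((quatRot (q t) * skew3 (r t)) i j) t := by
  intro t i j
  set s : ℝ := Real.sqrt (1 - dotProduct (q t) (q t)) with hs_def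
  have hpos : (0:ℝ) < 1 - dotProduct (q t) (q t) := by linarith [hqnorm t]
  have hs_pos : 0 < s := Real.sqrt_pos.mpr hpos
  have hs_sq : s ^ 2 = 1 - dotProduct (q t) (q t) := Real.sq_sqrt hpos.le
  -- component derivatives
  have hq := hasDerivAt_pi.mp (hqode t)
  have h0 : HasDerivAt (fun u => q u 0)
      ((1/2) * (s * r t 0 + (q t 1 * r t 2 - q t 2 * r t 1))) t := by
    have := hq 0
    simpa only [Pi.smul_apply, Pi.add_apply, cross_apply, smul_eq_mul, Matrix.cons_val_zero,
      Matrix.cons_val_one, Matrix.cons_val_two, Matrix.head_cons, Matrix.tail_cons,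
      ← hs_def] using this
  have h1 : HasDerivAt (fun u => q u 1)
      ((1/2) * (s * r t 1 + (q t 2 * r t 0 - q t 0 * r t 2))) t := by
    have := hq 1
    simpa only [Pi.smul_apply, Pi.add_apply, cross_apply, smul_eq_mul, Matrix.cons_val_zero,
      Matrix.cons_val_one, Matrix.cons_val_two, Matrix.head_cons, Matrix.tail_cons,
      ← hs_def] using this
  have h2 : HasDerivAt (fun u => q u 2)
      ((1/2) * (s * r t 2 + (q t 0 * r t 1 - q t 1 * r t 0))) t := by
    have := hq 2
    simpa only [Pi.smul_apply, Pi.add_apply, cross_apply, smul_eq_mul, Matrix.cons_val_zero,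
      Matrix.cons_val_one, Matrix.cons_val_two, Matrix.head_cons, Matrix.tail_cons,
      ← hs_def] using this
  -- derivative of the inner expression 1 - ⟪q,q⟫
  have hn : HasDerivAt (fun u => 1 - dotProduct (q u) (q u))
      (-(2 * (q t 0 * ((1/2) * (s * r t 0 + (q t 1 * r t 2 - q t 2 * r t 1)))
          + q t 1 * ((1/2) * (s * r t 1 + (q t 2 * r t 0 - q t 0 * r t 2)))
          + q t 2 * ((1/2) * (s * r t 2 + (q t 0 * r t 1 - q t 1 * r t 0)))))) t := by
    have : HasDerivAt (fun u => 1 - (q u 0 * q u 0 + q u 1 * q u 1 + q u 2 * q u 2))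
        (-(2 * (q t 0 * ((1/2) * (s * r t 0 + (q t 1 * r t 2 - q t 2 * r t 1)))
          + q t 1 * ((1/2) * (s * r t 1 + (q t 2 * r t 0 - q t 0 * r t 2)))
          + q t 2 * ((1/2) * (s * r t 2 + (q t 0 * r t 1 - q t 1 * r t 0)))))) t := by
      have := (hasDerivAt_const t (1:ℝ)).sub (((h0.mul h0).add (h1.mul h1)).add (h2.mul h2))
      refine this.congr_deriv ?_
      ring
    simpa [dotProduct, Fin.sum_univ_three] using this
  -- derivative of s(u)
  have hS : HasDerivAt (fun u => Real.sqrt (1 - dotProduct (q u) (q u)))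
      (-(1/2) * (q t 0 * r t 0 + q t 1 * r t 1 + q t 2 * r t 2)) t := by
    have := (Real.hasDerivAt_sqrt (ne_of_gt hpos)).comp t hn
    refine this.congr_deriv ?_
    rw [← hs_def]
    field_simp
    ring
  fin_cases i <;> fin_cases j <;>
    simp only [quatRot, skew3, Matrix.mul_apply, Fin.sum_univ_three, Fin.isValue,
      Matrix.cons_val', Matrix.cons_val_zero, Matrix.cons_val_one, Matrix.head_cons,
      Matrix.empty_val', Matrix.cons_val_fin_one, Matrix.head_fin_const, Matrix.of_apply,
      Fin.mk_zero, Fin.mk_one, fin3_mk_two, Matrix.cons_val_two, Matrix.tail_cons, mul_zero, mul_neg,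
      zero_add, add_zero, ← hs_def]
  · refine ((((hS.pow 2).add (h0.pow 2)).sub (h1.pow 2)).sub (h2.pow 2)).congr_deriv ?_; ring
  · refine (((h0.mul h1).sub (hS.mul h2)).const_mul 2).congr_deriv ?_; ring
  · refine (((h0.mul h2).add (hS.mul h1)).const_mul 2).congr_deriv ?_; ring
  · refine (((h1.mul h0).add (hS.mul h2)).const_mul 2).congr_deriv ?_; ring
  · refine ((((hS.pow 2).sub (h0.pow 2)).add (h1.pow 2)).sub (h2.pow 2)).congr_deriv ?_; ring
  · refine (((h1.mul h2).sub (hS.mul h0)).const_mul 2).congr_deriv ?_; ring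
  · refine (((h2.mul h0).sub (hS.mul h1)).const_mul 2).congr_deriv ?_; ring
  · refine (((h2.mul h1).add (hS.mul h0)).const_mul 2).congr_deriv ?_; ring
  · refine ((((hS.pow 2).sub (h0.pow 2)).sub (h1.pow 2)).add (h2.pow 2)).congr_deriv ?_; ring
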